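/- arXiv:2004.01365 — 2 statements merged into one kernel-verified Lean document; each statement's English description precedes it below -/
import Mathlib

section
/- In the C_5-setup, for each i the subgraph of G induced by A_i is P_3-free. -/
open SimpleGraph

/-- `G` contains no induced copy of `H`. -/
def InducedFree {W V : Type*} (H : SimpleGraph W) (G : SimpleGraph V) : Prop :=
  IsEmpty (H ↪g G)

/-- The `k`-wheel: a chordless cycle `C_k` plus an extra vertex adjacent to all of it. -/
def wheel (k : ℕ) : SimpleGraph (Fin k ⊕ Unit) :=
  SimpleGraph.fromRel (fun x y =>
    (∃ a b, x = Sum.inl a ∧ y = Sum.inl b ∧ (SimpleGraph.cycleGraph k).Adj a b) ∨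
    (x.isLeft ∧ y.isRight))

/-- A stable (independent) set: pairwise nonadjacent vertices. -/
def IsStableSet {V : Type*} (G : SimpleGraph V) (S : Set V) : Prop :=
  S.Pairwise (fun a b => ¬ G.Adj a b)

/-- A graph is nice if it has three disjoint stable sets whose removal
drops the clique number by at least 2. -/
def IsNice {V : Type*} (G : SimpleGraph V) : Prop :=
  ∃ S₁ S₂ S₃ : Set V, IsStableSet G S₁ ∧ IsStableSet G S₂ ∧ IsStableSet G S₃ ∧
    Disjoint S₁ S₂ ∧ Disjoint S₁ S₃ ∧ Disjoint S₂ S₃ ∧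
    (G.induce ((S₁ ∪ S₂ ∪ S₃)ᶜ)).cliqueNum ≤ G.cliqueNum - 2

/-- A quasi-line graph: every neighborhood is the union of two cliques. -/
def IsQuasiLine {V : Type*} (G : SimpleGraph V) : Prop :=
  ∀ v : V, ∃ K₁ K₂ : Set V, G.IsClique K₁ ∧ G.IsClique K₂ ∧
    G.neighborSet v = K₁ ∪ K₂

/-- A clique cutset: a clique whose removal increases the number of
connected components. -/
def HasCliqueCutset {V : Type*} (G : SimpleGraph V) : Prop :=
  ∃ Q : Set V, G.IsClique Q ∧
    Nat.card G.ConnectedComponent < Nat.card (G.induce (Qᶜ)).ConnectedComponent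

/-- An atom is a graph with no clique cutset. -/
def IsGraphAtom {V : Type*} (G : SimpleGraph V) : Prop := ¬ HasCliqueCutset G

/-- A perfect graph: every induced subgraph has chromatic number equal to
its clique number. -/
def IsPerfect {V : Type*} (G : SimpleGraph V) : Prop :=
  ∀ S : Set V, (G.induce S).chromaticNumber = ((G.induce S).cliqueNum : ℕ∞)

/-- The union `A = A₁ ∪ ⋯ ∪ A₅` of the `C₅`-setup. -/
def setA {V : Type*} (A : Fin 5 → Set V) : Set V := ⋃ i, A i

/-- `T`: vertices outside `A` with no neighbor in `A`. -/
def setT {V : Type*} (G : SimpleGraph V) (A : Fin 5 → Set V) : Set V :=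
  {x | x ∉ setA A ∧ ∀ a ∈ setA A, ¬ G.Adj x a}

/-- `Z`: vertices outside `A` with a neighbor in every `A i`. -/
def setZ {V : Type*} (G : SimpleGraph V) (A : Fin 5 → Set V) : Set V :=
  {x | x ∉ setA A ∧ ∀ i : Fin 5, ∃ a ∈ A i, G.Adj x a}

/-- `X i`: vertices outside `A` with a neighbor in each of `A i`, `A (i+2)`,
`A (i-2)`, and anticomplete to `A (i+1) ∪ A (i-1)`. -/
def setX {V : Type*} (G : SimpleGraph V) (A : Fin 5 → Set V) (i : Fin 5) : Set V :=
  {x | x ∉ setA A ∧ (∃ a ∈ A i, G.Adj x a) ∧ (∃ a ∈ A (i + 2), G.Adj x a) ∧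
    (∃ a ∈ A (i - 2), G.Adj x a) ∧ ∀ a ∈ A (i + 1) ∪ A (i - 1), ¬ G.Adj x a}

/-- `Y i`: vertices outside `A` with a neighbor in each `A j`, `j ≠ i`,
and anticomplete to `A i`. -/
def setY {V : Type*} (G : SimpleGraph V) (A : Fin 5 → Set V) (i : Fin 5) : Set V :=
  {x | x ∉ setA A ∧ (∀ j : Fin 5, j ≠ i → ∃ a ∈ A j, G.Adj x a) ∧
    ∀ a ∈ A i, ¬ G.Adj x a}

instance (k : ℕ) : DecidableRel (wheel k).Adj := fun x y =>
  decidable_of_iff _ (SimpleGraph.fromRel_adj _ x y).symm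

theorem stmt_11 {V : Type*} [Fintype V] (G : SimpleGraph V) (A : Fin 5 → Set V)
    (hconn : G.Connected)
    (hP5 : InducedFree (SimpleGraph.pathGraph 5) G)
    (hW4 : InducedFree (wheel 4) G)
    (hatom : IsGraphAtom G)
    (hAne : ∀ i : Fin 5, (A i).Nonempty)
    (hAdisj : ∀ i j : Fin 5, i ≠ j → Disjoint (A i) (A j))
    (hAcomp : ∀ i : Fin 5, ∀ a ∈ A i, ∀ b ∈ A (i + 1), G.Adj a b)
    (hAanti : ∀ i : Fin 5, ∀ a ∈ A i, ∀ b ∈ A (i + 2), ¬ G.Adj a b)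
    (hAmax : ∀ v : V, v ∉ setA A → ¬ ∃ i : Fin 5,
      (∀ a ∈ A (i - 1) ∪ A (i + 1), G.Adj v a) ∧
      (∀ a ∈ A (i - 2) ∪ A (i + 2), ¬ G.Adj v a)) :
    ∀ i : Fin 5, InducedFree (SimpleGraph.pathGraph 3) (G.induce (A i)) := by
  intro i
  constructor
  intro f
  obtain ⟨u, hu⟩ := hAne (i - 1)
  obtain ⟨w, hw⟩ := hAne (i + 1)
  set a : V := (f 0 : V) with ha_def
  set b : V := (f 1 : V) with hb_def
  set c : V := (f 2 : V) with hc_def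
  have ha : a ∈ A i := (f 0).2
  have hb : b ∈ A i := (f 1).2
  have hc : c ∈ A i := (f 2).2
  have hfin : ∀ j : Fin 5, j - 1 ≠ j ∧ j + 1 ≠ j ∧ j - 1 ≠ j + 1 ∧ j - 1 + 1 = j ∧
      j - 1 + 2 = j + 1 := by decide
  have h01 : (pathGraph 3).Adj 0 1 := by rw [pathGraph_adj]; decide
  have h12 : (pathGraph 3).Adj 1 2 := by rw [pathGraph_adj]; decide
  have hab : G.Adj a b := by
    have h := f.map_adj_iff.mpr h01
    simpa using h
  have hbc : G.Adj b c := by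
    have h := f.map_adj_iff.mpr h12
    simpa using h
  have hac : ¬ G.Adj a c := by
    intro h
    have h2 : (G.induce (A i)).Adj (f 0) (f 2) := by
      simp only [comap_adj, Function.Embedding.coe_subtype]
      exact h
    have h3 := f.map_adj_iff.mp h2
    rw [pathGraph_adj] at h3
    exact absurd h3 (by decide)
  have haneb : a ≠ b := G.ne_of_adj hab
  have hbnec : b ≠ c := G.ne_of_adj hbc
  have hanec : a ≠ c := by
    intro h
    have : (f 0) = (f 2) := Subtype.ext h
    have := f.injective this
    exact absurd this (by decide)
  have hune : ∀ x ∈ A i, u ≠ x := fun x hx h =>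
    (hAdisj (i - 1) i (hfin i).1).ne_of_mem hu hx h
  have hwne : ∀ x ∈ A i, w ≠ x := fun x hx h =>
    (hAdisj (i + 1) i (hfin i).2.1).ne_of_mem hw hx h
  have huw : u ≠ w := (hAdisj (i - 1) (i + 1) (hfin i).2.2.1).ne_of_mem hu hw
  have hucomp : ∀ x ∈ A i, G.Adj u x := fun x hx =>
    hAcomp (i - 1) u hu x (by rw [(hfin i).2.2.2.1]; exact hx)
  have hwcomp : ∀ x ∈ A i, G.Adj x w := fun x hx => hAcomp i x hx w hw
  have huwna : ¬ G.Adj u w := hAanti (i - 1) u hu w (by rw [(hfin i).2.2.2.2]; exact hw)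
  let g : Fin 4 ⊕ Unit → V := Sum.elim ![a, u, c, w] (fun _ => b)
  have hginj : Function.Injective g := by
    intro x y h
    rcases x with x | x <;> rcases y with y | y <;>
      fin_cases x <;> fin_cases y <;>
      simp only [g, Sum.elim_inl, Sum.elim_inr, Matrix.cons_val_zero, Matrix.cons_val_one,
        Matrix.head_cons, Matrix.cons_val_two, Matrix.tail_cons, Matrix.cons_val_three,
        Fin.isValue] at h <;>
      first
        | rfl
        | exact absurd h (hune _ ha)
        | exact absurd h (hune _ hb)
        | exact absurd h (hune _ hc)
        | exact absurd h (hwne _ ha)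
        | exact absurd h (hwne _ hb)
        | exact absurd h (hwne _ hc)
        | exact absurd h huw
        | exact absurd h.symm (hune _ ha)
        | exact absurd h.symm (hune _ hb)
        | exact absurd h.symm (hune _ hc)
        | exact absurd h.symm (hwne _ ha)
        | exact absurd h.symm (hwne _ hb)
        | exact absurd h.symm (hwne _ hc)
        | exact absurd h.symm huw
        | exact absurd h haneb
        | exact absurd h hanec
        | exact absurd h hbnec
        | exact absurd h.symm haneb
        | exact absurd h.symm hanec
        | exact absurd h.symm hbnec
  have hmap : ∀ x y, G.Adj (g x) (g y) ↔ (wheel 4).Adj x y := by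
    intro x y
    rcases x with x | x <;> rcases y with y | y <;>
      fin_cases x <;> fin_cases y <;>
      simp only [g, Sum.elim_inl, Sum.elim_inr, Matrix.cons_val_zero, Matrix.cons_val_one,
        Matrix.head_cons, Matrix.cons_val_two, Matrix.tail_cons, Matrix.cons_val_three,
        Fin.isValue] <;>
      constructor <;>
      intro h <;>
      first
        | decide
        | exact absurd h (G.irrefl)
        | exact absurd h hac
        | exact absurd h.symm hac
        | exact absurd h huwna
        | exact absurd h.symm huwna
        | exact absurd h (by decide)
        | exact hab
        | exact hab.symm
        | exact hbc
        | exact hbc.symm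
        | exact hucomp a ha
        | exact (hucomp a ha).symm
        | exact hucomp b hb
        | exact (hucomp b hb).symm
        | exact hucomp c hc
        | exact (hucomp c hc).symm
        | exact hwcomp a ha
        | exact (hwcomp a ha).symm
        | exact hwcomp b hb
        | exact (hwcomp b hb).symm
        | exact hwcomp c hc
        | exact (hwcomp c hc).symm
  exact hW4.false ⟨⟨g, hginj⟩, fun {x y} => hmap x y⟩
end

section
/- In the C_5-setup, if Z is nonempty then Z is a clique. -/
open SimpleGraph

instance pg5dec : DecidableRel (SimpleGraph.pathGraph 5).Adj :=
  fun _ _ => decidable_of_iff _ (SimpleGraph.pathGraph_adj).symm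

instance w4dec : DecidableRel (wheel 4).Adj :=
  fun x y => decidable_of_iff _ (SimpleGraph.fromRel_adj _ x y).symm

lemma no_P5 {V : Type*} {G : SimpleGraph V} (hP5 : InducedFree (SimpleGraph.pathGraph 5) G)
    (v0 v1 v2 v3 v4 : V)
    (e01 : G.Adj v0 v1) (e12 : G.Adj v1 v2) (e23 : G.Adj v2 v3) (e34 : G.Adj v3 v4)
    (n02 : ¬ G.Adj v0 v2) (n03 : ¬ G.Adj v0 v3) (n04 : ¬ G.Adj v0 v4)
    (n13 : ¬ G.Adj v1 v3) (n14 : ¬ G.Adj v1 v4) (n24 : ¬ G.Adj v2 v4)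
    (d02 : v0 ≠ v2) (d03 : v0 ≠ v3) (d04 : v0 ≠ v4)
    (d13 : v1 ≠ v3) (d14 : v1 ≠ v4) (d24 : v2 ≠ v4) : False := by
  have d01 := e01.ne
  have d12 := e12.ne
  have d23 := e23.ne
  have d34 := e34.ne
  let f : Fin 5 → V := fun i => match i with
    | ⟨0, _⟩ => v0 | ⟨1, _⟩ => v1 | ⟨2, _⟩ => v2 | ⟨3, _⟩ => v3 | ⟨4, _⟩ => v4
  have inj : Function.Injective f := by
    intro a b hab
    fin_cases a <;> fin_cases b <;>
      first
        | rfl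
        | (exfalso; revert hab;
           first
             | exact fun h => d01 h | exact fun h => d01 h.symm
             | exact fun h => d02 h | exact fun h => d02 h.symm
             | exact fun h => d03 h | exact fun h => d03 h.symm
             | exact fun h => d04 h | exact fun h => d04 h.symm
             | exact fun h => d12 h | exact fun h => d12 h.symm
             | exact fun h => d13 h | exact fun h => d13 h.symm
             | exact fun h => d14 h | exact fun h => d14 h.symm
             | exact fun h => d23 h | exact fun h => d23 h.symm
             | exact fun h => d24 h | exact fun h => d24 h.symm
             | exact fun h => d34 h | exact fun h => d34 h.symm)
  refine hP5.false ⟨⟨f, inj⟩, ?_⟩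
  intro a b
  fin_cases a <;> fin_cases b <;>
    first
      | exact iff_of_false (G.loopless.irrefl _) (by decide)
      | exact iff_of_true (by first
          | exact e01 | exact e01.symm | exact e12 | exact e12.symm
          | exact e23 | exact e23.symm | exact e34 | exact e34.symm) (by decide)
      | exact iff_of_false (by first
          | exact n02 | exact fun h => n02 h.symm
          | exact n03 | exact fun h => n03 h.symm
          | exact n04 | exact fun h => n04 h.symm
          | exact n13 | exact fun h => n13 h.symm
          | exact n14 | exact fun h => n14 h.symm
          | exact n24 | exact fun h => n24 h.symm) (by decide)

lemma no_W4 {V : Type*} {G : SimpleGraph V} (hW4 : InducedFree (wheel 4) G)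
    (v0 v1 v2 v3 hb : V)
    (e01 : G.Adj v0 v1) (e12 : G.Adj v1 v2) (e23 : G.Adj v2 v3) (e30 : G.Adj v3 v0)
    (h0 : G.Adj hb v0) (h1 : G.Adj hb v1) (h2 : G.Adj hb v2) (h3 : G.Adj hb v3)
    (n02 : ¬ G.Adj v0 v2) (n13 : ¬ G.Adj v1 v3)
    (d02 : v0 ≠ v2) (d13 : v1 ≠ v3) : False := by
  have d01 := e01.ne
  have d12 := e12.ne
  have d23 := e23.ne
  have d30 := e30.ne
  have dh0 := h0.ne
  have dh1 := h1.ne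
  have dh2 := h2.ne
  have dh3 := h3.ne
  let f : Fin 4 ⊕ Unit → V := fun x => match x with
    | Sum.inl ⟨0, _⟩ => v0 | Sum.inl ⟨1, _⟩ => v1
    | Sum.inl ⟨2, _⟩ => v2 | Sum.inl ⟨3, _⟩ => v3
    | Sum.inr _ => hb
  have inj : Function.Injective f := by
    rintro (a | a) (b | b) hab
    · fin_cases a <;> fin_cases b <;>
        first
          | rfl
          | (exfalso; revert hab;
             first
               | exact fun h => d01 h | exact fun h => d01 h.symm
               | exact fun h => d02 h | exact fun h => d02 h.symm
               | exact fun h => d12 h | exact fun h => d12 h.symm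
               | exact fun h => d13 h | exact fun h => d13 h.symm
               | exact fun h => d23 h | exact fun h => d23 h.symm
               | exact fun h => d30 h | exact fun h => d30 h.symm)
    · exfalso; fin_cases a <;> revert hab <;>
        first
          | exact fun h => dh0 h.symm | exact fun h => dh1 h.symm
          | exact fun h => dh2 h.symm | exact fun h => dh3 h.symm
    · exfalso; fin_cases b <;> revert hab <;>
        first
          | exact fun h => dh0 h | exact fun h => dh1 h
          | exact fun h => dh2 h | exact fun h => dh3 h
    · cases a; cases b; rfl
  refine hW4.false ⟨⟨f, inj⟩, ?_⟩
  rintro (a | a) (b | b)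
  · fin_cases a <;> fin_cases b <;>
      first
        | exact iff_of_false (G.loopless.irrefl _) (by decide)
        | exact iff_of_true (by first
            | exact e01 | exact e01.symm | exact e12 | exact e12.symm
            | exact e23 | exact e23.symm | exact e30 | exact e30.symm) (by decide)
        | exact iff_of_false (by first
            | exact n02 | exact fun h => n02 h.symm
            | exact n13 | exact fun h => n13 h.symm) (by decide)
  · cases b; fin_cases a <;>
      exact iff_of_true (by first
        | exact h0.symm | exact h1.symm | exact h2.symm | exact h3.symm) (by decide)
  · cases a; fin_cases b <;>
      exact iff_of_true (by first
        | exact h0 | exact h1 | exact h2 | exact h3) (by decide)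
  · cases a; cases b; exact iff_of_false (G.loopless.irrefl _) (by decide)

theorem stmt_18 {V : Type*} [Fintype V] (G : SimpleGraph V) (A : Fin 5 → Set V)
    (hconn : G.Connected)
    (hP5 : InducedFree (SimpleGraph.pathGraph 5) G)
    (hW4 : InducedFree (wheel 4) G)
    (hatom : IsGraphAtom G)
    (hAne : ∀ i : Fin 5, (A i).Nonempty)
    (hAdisj : ∀ i j : Fin 5, i ≠ j → Disjoint (A i) (A j))
    (hAcomp : ∀ i : Fin 5, ∀ a ∈ A i, ∀ b ∈ A (i + 1), G.Adj a b)
    (hAanti : ∀ i : Fin 5, ∀ a ∈ A i, ∀ b ∈ A (i + 2), ¬ G.Adj a b)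
    (hAmax : ∀ v : V, v ∉ setA A → ¬ ∃ i : Fin 5,
      (∀ a ∈ A (i - 1) ∪ A (i + 1), G.Adj v a) ∧
      (∀ a ∈ A (i - 2) ∪ A (i + 2), ¬ G.Adj v a))
    (hZ : (setZ G A).Nonempty) :
    G.IsClique (setZ G A) := by
  intro z hz z' hz' hne
  by_contra hzz
  have hzA : z ∉ setA A := hz.1
  have hz'A : z' ∉ setA A := hz'.1
  have hzN : ∀ i : Fin 5, ∃ a ∈ A i, G.Adj z a := hz.2
  have hz'N : ∀ i : Fin 5, ∃ a ∈ A i, G.Adj z' a := hz'.2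
  have memA : ∀ (i : Fin 5) (a : V), a ∈ A i → a ∈ setA A :=
    fun i a ha => Set.mem_iUnion.2 ⟨i, ha⟩
  have zneq : ∀ (i : Fin 5) (a : V), a ∈ A i → z ≠ a :=
    fun i a ha h => hzA (by rw [h]; exact memA i a ha)
  have z'neq : ∀ (i : Fin 5) (a : V), a ∈ A i → z' ≠ a :=
    fun i a ha h => hz'A (by rw [h]; exact memA i a ha)
  have pne : ∀ (i j : Fin 5), i ≠ j → ∀ (a b : V), a ∈ A i → b ∈ A j → a ≠ b :=
    fun i j hij a b ha hb h => Set.disjoint_left.1 (hAdisj i j hij) ha (by rw [h]; exact hb)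
  have comp : ∀ (i j : Fin 5), j = i + 1 → ∀ (a b : V), a ∈ A i → b ∈ A j → G.Adj a b :=
    fun i j hj a b ha hb => hAcomp i a ha b (by rw [← hj]; exact hb)
  have anti : ∀ (i j : Fin 5), j = i + 2 → ∀ (a b : V), a ∈ A i → b ∈ A j → ¬ G.Adj a b :=
    fun i j hj a b ha hb => hAanti i a ha b (by rw [← hj]; exact hb)
  have fadd : ∀ (i k l m : Fin 5), k + l = m → i + k + l = i + m :=
    fun i k l m h => by rw [add_assoc, h]
  have fadd0 : ∀ (i k l : Fin 5), k + l = 0 → i + k + l = i :=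
    fun i k l h => by rw [add_assoc, h, add_zero]
  have neadd : ∀ (i k l : Fin 5), k ≠ l → i + k ≠ i + l :=
    fun i k l hkl h => hkl (add_left_cancel h)
  have neadd0 : ∀ (i k : Fin 5), k ≠ 0 → i + k ≠ i :=
    fun i k hk h => hk (add_left_cancel (h.trans (add_zero i).symm))
  -- not all parts have a common neighbor of z, z'
  have notall : ¬ (∀ i : Fin 5, ∃ u ∈ A i, G.Adj z u ∧ G.Adj z' u) := by
    intro hall
    obtain ⟨u0, hu0, hz0, hz'0⟩ := hall 0
    obtain ⟨u1, hu1, hz1, hz'1⟩ := hall 1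
    obtain ⟨u2, hu2, hz2, hz'2⟩ := hall 2
    exact no_W4 hW4 u0 z u2 z' u1
      hz0.symm hz2 hz'2.symm hz'0
      (comp 0 1 (by decide) u0 u1 hu0 hu1).symm
      hz1.symm
      (comp 1 2 (by decide) u1 u2 hu1 hu2)
      hz'1.symm
      (anti 0 2 (by decide) u0 u2 hu0 hu2)
      hzz
      (pne 0 2 (by decide) u0 u2 hu0 hu2)
      hne
  -- the key lemma: no common neighbor in A i, but an adjacent cross pair in A i, is absurd
  have L1 : ∀ i : Fin 5, (¬ ∃ u ∈ A i, G.Adj z u ∧ G.Adj z' u) →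
      ∀ a b : V, a ∈ A i → b ∈ A i → G.Adj z a → G.Adj z' b → G.Adj a b → False := by
    intro i hci a b ha hb hza hz'b hab
    have hz'a : ¬ G.Adj z' a := fun h => hci ⟨a, ha, hza, h⟩
    have hzb : ¬ G.Adj z b := fun h => hci ⟨b, hb, h, hz'b⟩
    obtain ⟨t3, ht3⟩ := hAne (i + 2)
    obtain ⟨t4, ht4⟩ := hAne (i + 3)
    have E11 : i + 1 + 1 = i + 2 := fadd i 1 1 2 (by decide)
    have E23 : i + 2 + 1 = i + 3 := fadd i 2 1 3 (by decide)
    have E34 : i + 3 + 1 = i + 4 := fadd i 3 1 4 (by decide)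
    have E32 : i + 3 + 2 = i := fadd0 i 3 2 (by decide)
    have E42 : i + 4 + 2 = i + 1 := fadd i 4 2 1 (by decide)
    have E22 : i + 2 + 2 = i + 4 := fadd i 2 2 4 (by decide)
    have E12 : i + 1 + 2 = i + 3 := fadd i 1 2 3 (by decide)
    have zc3 : ∀ y ∈ A (i + 2), G.Adj z y := by
      intro y hy
      by_contra hzy
      obtain ⟨u4, hu4, hzu4⟩ := hzN (i + 3)
      exact no_P5 hP5 y u4 z a b
        (comp (i+2) (i+3) E23.symm y u4 hy hu4)
        hzu4.symm hza hab
        (fun h => hzy h.symm)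
        (fun h => anti i (i+2) rfl a y ha hy h.symm)
        (fun h => anti i (i+2) rfl b y hb hy h.symm)
        (anti (i+3) i E32.symm u4 a hu4 ha)
        (anti (i+3) i E32.symm u4 b hu4 hb)
        hzb
        ((zneq (i+2) y hy).symm)
        (pne (i+2) i (neadd0 i 2 (by decide)) y a hy ha)
        (pne (i+2) i (neadd0 i 2 (by decide)) y b hy hb)
        (pne (i+3) i (neadd0 i 3 (by decide)) u4 a hu4 ha)
        (pne (i+3) i (neadd0 i 3 (by decide)) u4 b hu4 hb)
        (zneq i b hb)
    have zc4 : ∀ y ∈ A (i + 3), G.Adj z y := by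
      intro y hy
      by_contra hzy
      obtain ⟨u3, hu3, hzu3⟩ := hzN (i + 2)
      exact no_P5 hP5 y u3 z a b
        (comp (i+2) (i+3) E23.symm u3 y hu3 hy).symm
        hzu3.symm hza hab
        (fun h => hzy h.symm)
        (anti (i+3) i E32.symm y a hy ha)
        (anti (i+3) i E32.symm y b hy hb)
        (fun h => anti i (i+2) rfl a u3 ha hu3 h.symm)
        (fun h => anti i (i+2) rfl b u3 hb hu3 h.symm)
        hzb
        ((zneq (i+3) y hy).symm)
        (pne (i+3) i (neadd0 i 3 (by decide)) y a hy ha)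
        (pne (i+3) i (neadd0 i 3 (by decide)) y b hy hb)
        (pne (i+2) i (neadd0 i 2 (by decide)) u3 a hu3 ha)
        (pne (i+2) i (neadd0 i 2 (by decide)) u3 b hu3 hb)
        (zneq i b hb)
    have z'c3 : ∀ y ∈ A (i + 2), G.Adj z' y := by
      intro y hy
      by_contra hz'y
      obtain ⟨u4, hu4, hz'u4⟩ := hz'N (i + 3)
      exact no_P5 hP5 y u4 z' b a
        (comp (i+2) (i+3) E23.symm y u4 hy hu4)
        hz'u4.symm hz'b hab.symm
        (fun h => hz'y h.symm)
        (fun h => anti i (i+2) rfl b y hb hy h.symm)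
        (fun h => anti i (i+2) rfl a y ha hy h.symm)
        (anti (i+3) i E32.symm u4 b hu4 hb)
        (anti (i+3) i E32.symm u4 a hu4 ha)
        hz'a
        ((z'neq (i+2) y hy).symm)
        (pne (i+2) i (neadd0 i 2 (by decide)) y b hy hb)
        (pne (i+2) i (neadd0 i 2 (by decide)) y a hy ha)
        (pne (i+3) i (neadd0 i 3 (by decide)) u4 b hu4 hb)
        (pne (i+3) i (neadd0 i 3 (by decide)) u4 a hu4 ha)
        (z'neq i a ha)
    have z'c4 : ∀ y ∈ A (i + 3), G.Adj z' y := by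
      intro y hy
      by_contra hz'y
      obtain ⟨u3, hu3, hz'u3⟩ := hz'N (i + 2)
      exact no_P5 hP5 y u3 z' b a
        (comp (i+2) (i+3) E23.symm u3 y hu3 hy).symm
        hz'u3.symm hz'b hab.symm
        (fun h => hz'y h.symm)
        (anti (i+3) i E32.symm y b hy hb)
        (anti (i+3) i E32.symm y a hy ha)
        (fun h => anti i (i+2) rfl b u3 hb hu3 h.symm)
        (fun h => anti i (i+2) rfl a u3 ha hu3 h.symm)
        hz'a
        ((z'neq (i+3) y hy).symm)
        (pne (i+3) i (neadd0 i 3 (by decide)) y b hy hb)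
        (pne (i+3) i (neadd0 i 3 (by decide)) y a hy ha)
        (pne (i+2) i (neadd0 i 2 (by decide)) u3 b hu3 hb)
        (pne (i+2) i (neadd0 i 2 (by decide)) u3 a hu3 ha)
        (z'neq i a ha)
    have nc2 : ¬ ∃ u ∈ A (i+1), G.Adj z u ∧ G.Adj z' u := by
      rintro ⟨u2, hu2, hzu2, hz'u2⟩
      exact no_W4 hW4 u2 z' t4 z t3
        hz'u2.symm
        (z'c4 t4 ht4)
        (zc4 t4 ht4).symm
        hzu2
        (comp (i+1) (i+2) E11.symm u2 t3 hu2 ht3).symm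
        (z'c3 t3 ht3).symm
        (comp (i+2) (i+3) E23.symm t3 t4 ht3 ht4)
        (zc3 t3 ht3).symm
        (anti (i+1) (i+3) E12.symm u2 t4 hu2 ht4)
        (fun h => hzz h.symm)
        (pne (i+1) (i+3) (neadd i 1 3 (by decide)) u2 t4 hu2 ht4)
        hne.symm
    have nc5 : ¬ ∃ u ∈ A (i+4), G.Adj z u ∧ G.Adj z' u := by
      rintro ⟨u5, hu5, hzu5, hz'u5⟩
      exact no_W4 hW4 u5 z' t3 z t4
        hz'u5.symm
        (z'c3 t3 ht3)
        (zc3 t3 ht3).symm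
        hzu5
        (comp (i+3) (i+4) E34.symm t4 u5 ht4 hu5)
        (z'c4 t4 ht4).symm
        (comp (i+2) (i+3) E23.symm t3 t4 ht3 ht4).symm
        (zc4 t4 ht4).symm
        (fun h => anti (i+2) (i+4) E22.symm t3 u5 ht3 hu5 h.symm)
        (fun h => hzz h.symm)
        (pne (i+4) (i+2) (neadd i 4 2 (by decide)) u5 t3 hu5 ht3)
        hne.symm
    have cross2 : ∀ a2 ∈ A (i+1), ∀ b2 ∈ A (i+1), G.Adj z a2 → G.Adj z' b2 → G.Adj a2 b2 := by
      intro a2 ha2 b2 hb2 hza2 hz'b2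
      by_contra hab2
      exact no_P5 hP5 a2 z t4 z' b2
        hza2.symm
        (zc4 t4 ht4)
        (z'c4 t4 ht4).symm
        hz'b2
        (anti (i+1) (i+3) E12.symm a2 t4 ha2 ht4)
        (fun h => nc2 ⟨a2, ha2, hza2, h.symm⟩)
        hab2
        hzz
        (fun h => nc2 ⟨b2, hb2, h, hz'b2⟩)
        (fun h => anti (i+1) (i+3) E12.symm b2 t4 hb2 ht4 h.symm)
        (pne (i+1) (i+3) (neadd i 1 3 (by decide)) a2 t4 ha2 ht4)
        ((z'neq (i+1) a2 ha2).symm)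
        (fun h => nc2 ⟨a2, ha2, hza2, by rw [h]; exact hz'b2⟩)
        hne
        (zneq (i+1) b2 hb2)
        (pne (i+3) (i+1) (neadd i 3 1 (by decide)) t4 b2 ht4 hb2)
    obtain ⟨a2, ha2, hza2⟩ := hzN (i+1)
    obtain ⟨b2, hb2, hz'b2⟩ := hz'N (i+1)
    obtain ⟨b5, hb5, hz'b5⟩ := hz'N (i+4)
    exact no_P5 hP5 z a2 b2 z' b5
      hza2
      (cross2 a2 ha2 b2 hb2 hza2 hz'b2)
      hz'b2.symm
      hz'b5
      (fun h => nc2 ⟨b2, hb2, h, hz'b2⟩)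
      hzz
      (fun h => nc5 ⟨b5, hb5, h, hz'b5⟩)
      (fun h => nc2 ⟨a2, ha2, hza2, h.symm⟩)
      (fun h => anti (i+4) (i+1) E42.symm b5 a2 hb5 ha2 h.symm)
      (fun h => anti (i+4) (i+1) E42.symm b5 b2 hb5 hb2 h.symm)
      (zneq (i+1) b2 hb2)
      hne
      (zneq (i+4) b5 hb5)
      ((z'neq (i+1) a2 ha2).symm)
      (pne (i+1) (i+4) (neadd i 1 4 (by decide)) a2 b5 ha2 hb5)
      (pne (i+1) (i+4) (neadd i 1 4 (by decide)) b2 b5 hb2 hb5)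
  -- propagation
  have prop : ∀ i : Fin 5, (¬ ∃ u ∈ A i, G.Adj z u ∧ G.Adj z' u) →
      (¬ ∃ u ∈ A (i+2), G.Adj z u ∧ G.Adj z' u) := by
    intro i hci
    rintro ⟨u, hu, hzu, hz'u⟩
    obtain ⟨a, ha, hza⟩ := hzN i
    obtain ⟨b, hb, hz'b⟩ := hz'N i
    by_cases hab : G.Adj a b
    · exact L1 i hci a b ha hb hza hz'b hab
    · exact no_P5 hP5 a z u z' b
        hza.symm hzu hz'u.symm hz'b
        (anti i (i+2) rfl a u ha hu)
        (fun h => hci ⟨a, ha, hza, h.symm⟩)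
        hab
        hzz
        (fun h => hci ⟨b, hb, h, hz'b⟩)
        (fun h => anti i (i+2) rfl b u hb hu h.symm)
        (pne i (i+2) (Ne.symm (neadd0 i 2 (by decide))) a u ha hu)
        ((z'neq i a ha).symm)
        (fun h => hci ⟨a, ha, hza, by rw [h]; exact hz'b⟩)
        hne
        (zneq i b hb)
        (pne (i+2) i (neadd0 i 2 (by decide)) u b hu hb)
  obtain ⟨i0, hi0⟩ := not_forall.1 notall
  have h2 := prop i0 hi0
  have h4 := prop (i0+2) h2
  have h6 := prop (i0+2+2) h4
  have h8 := prop (i0+2+2+2) h6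
  have cover : ∀ (k j : Fin 5), j = k ∨ j = k+2 ∨ j = k+2+2 ∨ j = k+2+2+2 ∨ j = k+2+2+2+2 := by
    decide
  have allnc : ∀ j : Fin 5, ¬ ∃ u ∈ A j, G.Adj z u ∧ G.Adj z' u := by
    intro j
    rcases cover i0 j with h|h|h|h|h
    · subst h; exact hi0
    · subst h; exact h2
    · subst h; exact h4
    · subst h; exact h6
    · subst h; exact h8
  obtain ⟨a1, ha1, hza1⟩ := hzN 0
  obtain ⟨b2, hb2, hz'b2⟩ := hz'N 1
  obtain ⟨b4, hb4, hz'b4⟩ := hz'N 3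
  exact no_P5 hP5 z a1 b2 z' b4
    hza1
    (comp 0 1 (by decide) a1 b2 ha1 hb2)
    hz'b2.symm
    hz'b4
    (fun h => allnc 1 ⟨b2, hb2, h, hz'b2⟩)
    hzz
    (fun h => allnc 3 ⟨b4, hb4, h, hz'b4⟩)
    (fun h => allnc 0 ⟨a1, ha1, hza1, h.symm⟩)
    (fun h => anti 3 0 (by decide) b4 a1 hb4 ha1 h.symm)
    (anti 1 3 (by decide) b2 b4 hb2 hb4)
    (zneq 1 b2 hb2)
    hne
    (zneq 3 b4 hb4)
    ((z'neq 0 a1 ha1).symm)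
    (pne 0 3 (by decide) a1 b4 ha1 hb4)
    (pne 1 3 (by decide) b2 b4 hb2 hb4)
end
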